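/- Let T₁ and T₂ be reduction operators relative to a well-ordered set (G, <). If ker(T₂) ⊆ ker(T₁), then every T₁-normal form generator is a T₂-normal form, i.e., for every g ∈ G, T₁(g) = g implies T₂(g) = g. -/

import Mathlib

/-- A reduction operator relative to a well-ordered set `(G, <)`: an idempotent
`K`-linear endomorphism `T` of `G →₀ K` such that `T g ≤ g` for every generator `g`,
i.e. either `T` fixes the basis vector of `g`, or every generator in the support of
its image is strictly smaller than `g`. -/
def IsReductionOperator {K G : Type*} [Field K] [LinearOrder G]
    (T : (G →₀ K) →ₗ[K] (G →₀ K)) : Prop :=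
  T ∘ₗ T = T ∧ ∀ g : G,
    T (Finsupp.single g 1) = Finsupp.single g 1 ∨
      ∀ h ∈ (T (Finsupp.single g 1)).support, h < g

theorem stmt_1 {K G : Type*} [Field K] [LinearOrder G] [WellFoundedLT G]
    (T₁ T₂ : (G →₀ K) →ₗ[K] (G →₀ K))
    (h₁ : IsReductionOperator T₁) (h₂ : IsReductionOperator T₂)
    (hker : LinearMap.ker T₂ ≤ LinearMap.ker T₁) :
    ∀ g : G, T₁ (Finsupp.single g 1) = Finsupp.single g 1 →
      T₂ (Finsupp.single g 1) = Finsupp.single g 1 := by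
  intro g hg
  rcases h₂.2 g with h | hlt
  · exact h
  · exfalso
    set y := T₂ (Finsupp.single g 1) with hy
    -- T₂ is idempotent on y
    have hyy : T₂ y = y := by
      rw [hy, ← LinearMap.comp_apply, h₂.1]
    have hker' : Finsupp.single g 1 - y ∈ LinearMap.ker T₂ := by
      simp [LinearMap.mem_ker, map_sub, hyy, hy]
      rw [← LinearMap.comp_apply, h₂.1, sub_self]
    have hT1 : T₁ y = Finsupp.single g 1 := by
      have := hker hker'
      rw [LinearMap.mem_ker, map_sub, sub_eq_zero] at this
      rw [← this, hg]
    -- every element of support of T₁ y is < g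
    have key : ∀ k ∈ (T₁ y).support, k < g := by
      intro k hk
      have hrep : y = y.sum fun a b => b • Finsupp.single a (1 : K) := by
        conv_lhs => rw [← Finsupp.sum_single y]
        refine Finsupp.sum_congr fun a _ => ?_
        rw [Finsupp.smul_single, smul_eq_mul, mul_one]
      have hTy : T₁ y = y.sum fun a b => b • T₁ (Finsupp.single a (1 : K)) := by
        conv_lhs => rw [hrep]
        rw [map_finsuppSum]
        exact Finsupp.sum_congr fun a _ => by rw [map_smul]
      rw [hTy] at hk
      have := Finsupp.support_sum hk
      rw [Finset.mem_biUnion] at this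
      obtain ⟨a, ha, hka⟩ := this
      have hag : a < g := hlt a ha
      have hka' : k ∈ (T₁ (Finsupp.single a (1 : K))).support :=
        Finsupp.support_smul hka
      rcases h₁.2 a with hfix | hsm
      · rw [hfix, Finsupp.support_single_ne_zero a one_ne_zero] at hka'
        simp at hka'
        exact hka' ▸ hag
      · exact (hsm k hka').trans hag
    have hgmem : g ∈ (T₁ y).support := by
      rw [hT1]
      simp [Finsupp.support_single_ne_zero g (one_ne_zero (α := K))]
    exact lt_irrefl g (key g hgmem)
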